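/- Let f : V → V' and g : V' → V'' be linear maps of finite-dimensional complex vector spaces with g ∘ f = 0, equipped with compatible endomorphisms T, T', T''. Let r > 0 avoid all eigenvalue absolute values of T, T', T''. If the sequence V → V' → V'' is exact at V', then the induced sequence V^{<r} → (V')^{<r} → (V'')^{<r} on the sums of generalized eigenspaces for eigenvalue absolute value < r is also exact at (V')^{<r}. -/

import Mathlib

open Module

/-- The sum of the generalized eigenspaces of `T` for eigenvalues `μ` satisfying `P μ`. -/
noncomputable def sumGenEig {V : Type*} [AddCommGroup V] [Module ℂ V]
    (T : Module.End ℂ V) (P : ℂ → Prop) : Submodule ℂ V :=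
  ⨆ μ ∈ {μ : ℂ | P μ}, T.maxGenEigenspace μ

lemma map_maxGenEig_le {V V' : Type*} [AddCommGroup V] [Module ℂ V]
    [AddCommGroup V'] [Module ℂ V']
    (f : V →ₗ[ℂ] V') (T : Module.End ℂ V) (T' : Module.End ℂ V')
    (hfT : f ∘ₗ T = T' ∘ₗ f) (μ : ℂ) :
    (T.maxGenEigenspace μ).map f ≤ T'.maxGenEigenspace μ := by
  have h1 : f ∘ₗ (T - μ • 1) = (T' - μ • 1) ∘ₗ f := by
    ext x
    simp only [LinearMap.comp_apply, LinearMap.sub_apply, LinearMap.smul_apply,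
      Module.End.one_apply, map_sub, map_smul]
    rw [show f (T x) = T' (f x) from LinearMap.congr_fun hfT x]
  have key : ∀ k : ℕ, f ∘ₗ ((T - μ • 1) ^ k) = ((T' - μ • 1) ^ k) ∘ₗ f := by
    intro k
    induction k with
    | zero => ext x; simp
    | succ k ih =>
      rw [pow_succ, pow_succ]
      calc f ∘ₗ ((T - μ • 1) ^ k * (T - μ • 1))
          = (f ∘ₗ ((T - μ • 1) ^ k)) ∘ₗ (T - μ • 1) := by
            ext x; simp [Module.End.mul_apply]
        _ = (((T' - μ • 1) ^ k) ∘ₗ f) ∘ₗ (T - μ • 1) := by rw [ih]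
        _ = ((T' - μ • 1) ^ k) ∘ₗ (f ∘ₗ (T - μ • 1)) := by rw [LinearMap.comp_assoc]
        _ = ((T' - μ • 1) ^ k) ∘ₗ ((T' - μ • 1) ∘ₗ f) := by rw [h1]
        _ = ((T' - μ • 1) ^ k * (T' - μ • 1)) ∘ₗ f := by
            ext x; simp [Module.End.mul_apply]
  rintro x ⟨y, hy, rfl⟩
  obtain ⟨k, hk⟩ := (Module.End.mem_maxGenEigenspace T μ y).mp hy
  exact (Module.End.mem_maxGenEigenspace T' μ (f y)).mpr
    ⟨k, by rw [← LinearMap.comp_apply, ← key k, LinearMap.comp_apply, hk, map_zero]⟩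

lemma map_sumGenEig_le {V V' : Type*} [AddCommGroup V] [Module ℂ V]
    [AddCommGroup V'] [Module ℂ V']
    (f : V →ₗ[ℂ] V') (T : Module.End ℂ V) (T' : Module.End ℂ V')
    (hfT : f ∘ₗ T = T' ∘ₗ f) (P : ℂ → Prop) :
    (sumGenEig T P).map f ≤ sumGenEig T' P := by
  rw [sumGenEig, Submodule.map_iSup]
  refine iSup_le fun μ => ?_
  rw [Submodule.map_iSup]
  refine iSup_le fun hμ => ?_
  exact le_trans (map_maxGenEig_le f T T' hfT μ)
    (le_iSup₂ (f := fun μ _ => T'.maxGenEigenspace μ) μ hμ)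

lemma finset_supIndep_disjoint {α : Type*} [Lattice α] [OrderBot α] [IsModularLattice α]
    {ι : Type*} [DecidableEq ι] {E : ι → α} {G : Finset ι} (F : Finset ι)
    (h : (F ∪ G).SupIndep E) (hFG : Disjoint F G) :
    Disjoint (F.sup E) (G.sup E) := by
  induction F using Finset.induction_on with
  | empty => simp
  | @insert a F' ha ih =>
    have hsub : F' ∪ G ⊆ insert a F' ∪ G :=
      Finset.union_subset_union (Finset.subset_insert a F') (le_refl G)
    have hFG' : Disjoint F' G := hFG.mono_left (Finset.subset_insert a F')
    have ih' := ih (h.subset hsub) hFG'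
    have haG : a ∉ G := Finset.disjoint_left.mp hFG (Finset.mem_insert_self a F')
    have haFG : a ∉ F' ∪ G := by
      simp only [Finset.mem_union]
      rintro (h1 | h2)
      exacts [ha h1, haG h2]
    have hd : Disjoint (E a) ((F' ∪ G).sup E) :=
      h hsub (Finset.mem_union_left G (Finset.mem_insert_self a F')) haFG
    rw [Finset.sup_union] at hd
    rw [Finset.sup_insert]
    exact Disjoint.disjoint_sup_left_of_disjoint_sup_right ih' hd

lemma disjoint_biSup_compl {R M : Type*} [CommRing R] [AddCommGroup M] [Module R M]
    {ι : Type*} {E : ι → Submodule R M} (hind : iSupIndep E) (s : Set ι) :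
    Disjoint (⨆ μ ∈ s, E μ) (⨆ μ ∈ sᶜ, E μ) := by
  classical
  rw [Submodule.disjoint_def]
  intro x hx hx'
  rw [iSup_subtype'] at hx hx'
  obtain ⟨F, hF⟩ := Submodule.mem_iSup_iff_exists_finset.mp hx
  obtain ⟨G, hG⟩ := Submodule.mem_iSup_iff_exists_finset.mp hx'
  set F' : Finset ι := F.image Subtype.val with hF'def
  set G' : Finset ι := G.image Subtype.val with hG'def
  have hxF : x ∈ F'.sup E := by
    refine (iSup₂_le fun μ hμ => ?_ : (⨆ μ ∈ F, E μ.val) ≤ F'.sup E) hF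
    exact Finset.le_sup (Finset.mem_image_of_mem Subtype.val hμ)
  have hxG : x ∈ G'.sup E := by
    refine (iSup₂_le fun μ hμ => ?_ : (⨆ μ ∈ G, E μ.val) ≤ G'.sup E) hG
    exact Finset.le_sup (Finset.mem_image_of_mem Subtype.val hμ)
  have hdisjFG : Disjoint F' G' := by
    rw [Finset.disjoint_left]
    intro a haF haG
    obtain ⟨⟨a₁, ha₁⟩, -, rfl⟩ := Finset.mem_image.mp haF
    obtain ⟨⟨a₂, ha₂⟩, -, h₂⟩ := Finset.mem_image.mp haG
    have he : a₂ = a₁ := by simpa using h₂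
    exact ha₂ (he ▸ ha₁)
  have := finset_supIndep_disjoint F' (hind.supIndep' (F' ∪ G')) hdisjFG
  exact (Submodule.disjoint_def.mp this) x hxF hxG

lemma disjoint_sumGenEig {V : Type*} [AddCommGroup V] [Module ℂ V]
    (T : Module.End ℂ V) (P : ℂ → Prop) :
    Disjoint (sumGenEig T P) (sumGenEig T (fun μ => ¬ P μ)) := by
  have h := disjoint_biSup_compl (Module.End.independent_maxGenEigenspace T) {μ : ℂ | P μ}
  have hc : {μ : ℂ | P μ}ᶜ = {μ : ℂ | ¬ P μ} := by ext μ; simp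
  rw [hc] at h
  exact h

theorem stmt_12 {V V' V'' : Type*}
    [AddCommGroup V] [Module ℂ V] [FiniteDimensional ℂ V]
    [AddCommGroup V'] [Module ℂ V'] [FiniteDimensional ℂ V']
    [AddCommGroup V''] [Module ℂ V''] [FiniteDimensional ℂ V'']
    (f : V →ₗ[ℂ] V') (g : V' →ₗ[ℂ] V'')
    (T : Module.End ℂ V) (T' : Module.End ℂ V') (T'' : Module.End ℂ V'')
    (hfT : f ∘ₗ T = T' ∘ₗ f) (hgT : g ∘ₗ T' = T'' ∘ₗ g)
    (r : ℝ) (hr : 0 < r)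
    (hEig : ∀ μ : ℂ, T.HasEigenvalue μ → ‖μ‖ ≠ r)
    (hEig' : ∀ μ : ℂ, T'.HasEigenvalue μ → ‖μ‖ ≠ r)
    (hEig'' : ∀ μ : ℂ, T''.HasEigenvalue μ → ‖μ‖ ≠ r)
    (hgf : g ∘ₗ f = 0) (hex : LinearMap.ker g = LinearMap.range f) :
    (sumGenEig T (fun μ => ‖μ‖ < r)).map f
      ≤ sumGenEig T' (fun μ => ‖μ‖ < r) ∧
    (sumGenEig T' (fun μ => ‖μ‖ < r)).map g
      ≤ sumGenEig T'' (fun μ => ‖μ‖ < r) ∧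
    sumGenEig T' (fun μ => ‖μ‖ < r) ⊓ LinearMap.ker g
      = (sumGenEig T (fun μ => ‖μ‖ < r)).map f := by
  set P : ℂ → Prop := fun μ => ‖μ‖ < r with hP
  refine ⟨map_sumGenEig_le f T T' hfT P, map_sumGenEig_le g T' T'' hgT P, ?_⟩
  apply le_antisymm
  · rintro x ⟨hx, hxg⟩
    rw [hex] at hxg
    obtain ⟨y, rfl⟩ := hxg
    have htop : sumGenEig T P ⊔ sumGenEig T (fun μ => ¬ P μ) = ⊤ := by
      rw [sumGenEig, sumGenEig]
      simp only [Set.mem_setOf_eq]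
      rw [← iSup_split _ P]
      exact Module.End.iSup_maxGenEigenspace_eq_top T
    have hy : y ∈ sumGenEig T P ⊔ sumGenEig T (fun μ => ¬ P μ) := htop ▸ Submodule.mem_top
    obtain ⟨y₁, hy₁, y₂, hy₂, rfl⟩ := Submodule.mem_sup.mp hy
    have h2 : f y₂ ∈ sumGenEig T' (fun μ => ¬ P μ) :=
      map_sumGenEig_le f T T' hfT _ ⟨y₂, hy₂, rfl⟩
    have h1 : f y₁ ∈ sumGenEig T' P :=
      map_sumGenEig_le f T T' hfT _ ⟨y₁, hy₁, rfl⟩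
    have hsum : f (y₁ + y₂) = f y₁ + f y₂ := map_add f y₁ y₂
    have h2' : f y₂ ∈ sumGenEig T' P := by
      have heq : f y₂ = f (y₁ + y₂) - f y₁ := by rw [hsum]; abel
      rw [heq]
      exact Submodule.sub_mem _ hx h1
    have hz : f y₂ = 0 :=
      (Submodule.disjoint_def.mp (disjoint_sumGenEig T' P)) (f y₂) h2' h2
    exact ⟨y₁, hy₁, by rw [hsum, hz, add_zero]⟩
  · refine le_inf (map_sumGenEig_le f T T' hfT P) ?_
    rintro x ⟨y, _, rfl⟩
    simp only [SetLike.mem_coe, LinearMap.mem_ker]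
    exact LinearMap.congr_fun hgf y
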